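/- Let A and B be finite dimensional G-graded algebras such that every element of supp(A) commutes with every element of supp(B). If A and B are graded Frobenius, then the tensor product A ⊗ B, with grading (A⊗B)_σ = ⊕_{gh=σ} A_g ⊗ B_h, is graded Frobenius; the same holds with 'graded symmetric' in place of 'graded Frobenius'. -/
import Mathlib


/-- The degree-`g` component of the dual of a graded module:
`(M*)_g = { f | f(M_h) = 0 for all h ≠ g⁻¹ }`. -/
def dualComponent {k M : Type*} [Field k] [AddCommGroup M] [Module k M]
    {G : Type*} [Group G] (ℳ : G → Submodule k M) (g : G) :
    Submodule k (Module.Dual k M) where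
  carrier := {f | ∀ h : G, h ≠ g⁻¹ → ∀ x ∈ ℳ h, f x = 0}
  zero_mem' := by intro h hh x hx; rfl
  add_mem' := by
    intro f₁ f₂ h₁ h₂ h hh x hx
    simp [h₁ h hh x hx, h₂ h hh x hx]
  smul_mem' := by
    intro c f hf h hh x hx
    simp [hf h hh x hx]

/-- `A` is graded symmetric: `A ≅ A*` as graded `(A,A)`-bimodules, where the left
action on `A*` is `(a • f) y = f (y * a)`, the right action is `(f • a) y = f (a * y)`,
and `(A*)_g = { f | f(A_h) = 0 for h ≠ g⁻¹ }`. -/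
def IsGradedSymmetric {k A : Type*} [Field k] [Ring A] [Algebra k A]
    {G : Type*} [Group G] (𝒜 : G → Submodule k A) : Prop :=
  ∃ φ : A ≃ₗ[k] Module.Dual k A,
    (∀ a x y : A, φ (a * x) y = φ x (y * a)) ∧
    (∀ a x y : A, φ (x * a) y = φ x (a * y)) ∧
    ∀ g : G, ∀ x ∈ 𝒜 g, φ x ∈ dualComponent 𝒜 g

/-- `A` is `σ`-graded Frobenius: `A(σ) ≅ A*` as graded left `A`-modules. -/
def IsSigmaGradedFrobenius {k A : Type*} [Field k] [Ring A] [Algebra k A]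
    {G : Type*} [Group G] (𝒜 : G → Submodule k A) (σ : G) : Prop :=
  ∃ φ : A ≃ₗ[k] Module.Dual k A,
    (∀ a x y : A, φ (a * x) y = φ x (y * a)) ∧
    ∀ g : G, ∀ x ∈ 𝒜 (g * σ), φ x ∈ dualComponent 𝒜 g



open TensorProduct Module

section Aux

variable {k A B : Type*} [Field k] [Ring A] [Algebra k A] [Ring B] [Algebra k B]
  [FiniteDimensional k A] [FiniteDimensional k B]

noncomputable def tensorPhi (φA : A ≃ₗ[k] Dual k A) (φB : B ≃ₗ[k] Dual k B) :
    (A ⊗[k] B) ≃ₗ[k] Dual k (A ⊗[k] B) :=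
  (TensorProduct.congr φA φB).trans (TensorProduct.dualDistribEquiv k A B)

lemma tensorPhi_tmul (φA : A ≃ₗ[k] Dual k A) (φB : B ≃ₗ[k] Dual k B)
    (a : A) (b : B) (u : A) (v : B) :
    tensorPhi φA φB (a ⊗ₜ b) (u ⊗ₜ v) = φA a u * φB b v := by
  simp [tensorPhi]

lemma tensorPhi_left (φA : A ≃ₗ[k] Dual k A) (φB : B ≃ₗ[k] Dual k B)
    (hA : ∀ a x y : A, φA (a * x) y = φA x (y * a))
    (hB : ∀ a x y : B, φB (a * x) y = φB x (y * a)) :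
    ∀ a x y : A ⊗[k] B, tensorPhi φA φB (a * x) y = tensorPhi φA φB x (y * a) := by
  intro a x y
  induction a using TensorProduct.induction_on with
  | zero => simp
  | add a₁ a₂ h₁ h₂ => simp [add_mul, mul_add, h₁, h₂]
  | tmul a₁ a₂ =>
    induction x using TensorProduct.induction_on with
    | zero => simp
    | add x₁ x₂ h₁ h₂ => simp [mul_add, h₁, h₂]
    | tmul x₁ x₂ =>
      induction y using TensorProduct.induction_on with
      | zero => simp
      | add y₁ y₂ h₁ h₂ =>
        simp only [Algebra.TensorProduct.tmul_mul_tmul] at h₁ h₂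
        simp [add_mul, h₁, h₂]
      | tmul y₁ y₂ =>
        simp [Algebra.TensorProduct.tmul_mul_tmul, tensorPhi_tmul, hA, hB]

lemma tensorPhi_right (φA : A ≃ₗ[k] Dual k A) (φB : B ≃ₗ[k] Dual k B)
    (hA : ∀ a x y : A, φA (x * a) y = φA x (a * y))
    (hB : ∀ a x y : B, φB (x * a) y = φB x (a * y)) :
    ∀ a x y : A ⊗[k] B, tensorPhi φA φB (x * a) y = tensorPhi φA φB x (a * y) := by
  intro a x y
  induction a using TensorProduct.induction_on with
  | zero => simp
  | add a₁ a₂ h₁ h₂ => simp [add_mul, mul_add, h₁, h₂]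
  | tmul a₁ a₂ =>
    induction x using TensorProduct.induction_on with
    | zero => simp
    | add x₁ x₂ h₁ h₂ => simp [add_mul, h₁, h₂]
    | tmul x₁ x₂ =>
      induction y using TensorProduct.induction_on with
      | zero => simp
      | add y₁ y₂ h₁ h₂ =>
        simp only [Algebra.TensorProduct.tmul_mul_tmul] at h₁ h₂
        simp [mul_add, h₁, h₂]
      | tmul y₁ y₂ =>
        simp [Algebra.TensorProduct.tmul_mul_tmul, tensorPhi_tmul, hA, hB]

end Aux

section Grading

variable {k A B : Type*} [Field k] [Ring A] [Algebra k A] [Ring B] [Algebra k B]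
  [FiniteDimensional k A] [FiniteDimensional k B]
  {G : Type*} [Group G]

lemma tensorPhi_grading (𝒜 : G → Submodule k A) (ℬ : G → Submodule k B)
    (hsupp : ∀ g h : G, 𝒜 g ≠ ⊥ → ℬ h ≠ ⊥ → g * h = h * g)
    (φA : A ≃ₗ[k] Module.Dual k A) (φB : B ≃ₗ[k] Module.Dual k B)
    (hA : ∀ g : G, ∀ x ∈ 𝒜 g, φA x ∈ dualComponent 𝒜 g)
    (hB : ∀ g : G, ∀ x ∈ ℬ g, φB x ∈ dualComponent ℬ g)
    (g : G) (x : A ⊗[k] B)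
    (hx : x ∈ ⨆ p : {p : G × G // p.1 * p.2 = g},
      LinearMap.range (TensorProduct.map (𝒜 p.1.1).subtype (ℬ p.1.2).subtype)) :
    tensorPhi φA φB x ∈
      dualComponent (fun σ : G => ⨆ p : {p : G × G // p.1 * p.2 = σ},
        LinearMap.range (TensorProduct.map (𝒜 p.1.1).subtype (ℬ p.1.2).subtype)) g := by
  intro h hh y hy
  induction hx using Submodule.iSup_induction' with
  | zero => simp
  | add x₁ x₂ hx₁ hx₂ ih₁ ih₂ => simp [ih₁, ih₂]
  | mem p x hx =>
    obtain ⟨⟨g₁, g₂⟩, (hp : g₁ * g₂ = g)⟩ := p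
    obtain ⟨t, rfl⟩ := hx
    induction t using TensorProduct.induction_on with
    | zero => simp
    | add t₁ t₂ ih₁ ih₂ => simp [ih₁, ih₂]
    | tmul a b =>
      obtain ⟨a, ha⟩ := a
      obtain ⟨b, hb⟩ := b
      simp only [TensorProduct.map_tmul, Submodule.coe_subtype]
      by_cases ha0 : a = 0
      · simp [ha0]
      by_cases hb0 : b = 0
      · simp [hb0]
      have hg₁ : 𝒜 g₁ ≠ ⊥ := fun hbot => ha0 (by simpa [hbot] using ha)
      have hg₂ : ℬ g₂ ≠ ⊥ := fun hbot => hb0 (by simpa [hbot] using hb)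
      have hcomm : g₁ * g₂ = g₂ * g₁ := hsupp g₁ g₂ hg₁ hg₂
      induction hy using Submodule.iSup_induction' with
      | zero => simp
      | add y₁ y₂ hy₁ hy₂ ih₁ ih₂ => simp [ih₁, ih₂]
      | mem q y hy =>
        obtain ⟨⟨h₁, h₂⟩, (hq : h₁ * h₂ = h)⟩ := q
        obtain ⟨s, rfl⟩ := hy
        induction s using TensorProduct.induction_on with
        | zero => simp
        | add s₁ s₂ ih₁ ih₂ => simp [ih₁, ih₂]
        | tmul u v =>
          obtain ⟨u, hu⟩ := u
          obtain ⟨v, hv⟩ := v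
          simp only [TensorProduct.map_tmul, Submodule.coe_subtype, tensorPhi_tmul]
          by_cases h₁eq : h₁ = g₁⁻¹
          · by_cases h₂eq : h₂ = g₂⁻¹
            · exfalso
              apply hh
              rw [← hq, h₁eq, h₂eq, ← hp]
              rw [← mul_inv_rev, ← hcomm, mul_inv_rev]
            · rw [hB g₂ b hb h₂ h₂eq v hv, mul_zero]
          · rw [hA g₁ a ha h₁ h₁eq u hu, zero_mul]

end Grading

open TensorProduct in
/-- let `A`, `B` be finite dimensional `G`-graded algebras such that every
element of `supp(A)` commutes with every element of `supp(B)`.  If `A` and `B` are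
graded Frobenius then so is `A ⊗ B` with the grading `(A⊗B)_σ = ⊕_{gh=σ} A_g ⊗ B_h`;
the same holds with "graded symmetric" in place of "graded Frobenius". -/
theorem tensorProduct_gradedFrobenius_and_gradedSymmetric
    {k A B : Type*} [Field k] [Ring A] [Algebra k A] [Ring B] [Algebra k B]
    [FiniteDimensional k A] [FiniteDimensional k B]
    {G : Type*} [Group G] [DecidableEq G]
    (𝒜 : G → Submodule k A) (ℬ : G → Submodule k B)
    (hAinternal : DirectSum.IsInternal 𝒜) (hBinternal : DirectSum.IsInternal ℬ)
    (hAone : (1 : A) ∈ 𝒜 1) (hBone : (1 : B) ∈ ℬ 1)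
    (hAmul : ∀ {g h : G}, ∀ a ∈ 𝒜 g, ∀ b ∈ 𝒜 h, a * b ∈ 𝒜 (g * h))
    (hBmul : ∀ {g h : G}, ∀ a ∈ ℬ g, ∀ b ∈ ℬ h, a * b ∈ ℬ (g * h))
    (hsupp : ∀ g h : G, 𝒜 g ≠ ⊥ → ℬ h ≠ ⊥ → g * h = h * g) :
    (IsSigmaGradedFrobenius 𝒜 (1 : G) → IsSigmaGradedFrobenius ℬ (1 : G) →
      IsSigmaGradedFrobenius
        (fun σ : G => ⨆ p : {p : G × G // p.1 * p.2 = σ},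
          LinearMap.range (TensorProduct.map (𝒜 p.1.1).subtype (ℬ p.1.2).subtype))
        (1 : G)) ∧
    (IsGradedSymmetric 𝒜 → IsGradedSymmetric ℬ →
      IsGradedSymmetric
        (fun σ : G => ⨆ p : {p : G × G // p.1 * p.2 = σ},
          LinearMap.range (TensorProduct.map (𝒜 p.1.1).subtype (ℬ p.1.2).subtype))) := by
  classical
  set T : G → Submodule k (A ⊗[k] B) := fun σ : G =>
    ⨆ p : {p : G × G // p.1 * p.2 = σ},
      LinearMap.range (TensorProduct.map (𝒜 p.1.1).subtype (ℬ p.1.2).subtype) with hT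
  constructor
  · rintro ⟨φA, hA1, hA2⟩ ⟨φB, hB1, hB2⟩
    refine ⟨tensorPhi φA φB, tensorPhi_left φA φB hA1 hB1, ?_⟩
    intro g x hx
    exact tensorPhi_grading 𝒜 ℬ hsupp φA φB
      (fun g' x' hx' => hA2 g' x' (by rwa [mul_one]))
      (fun g' x' hx' => hB2 g' x' (by rwa [mul_one]))
      g x (by rwa [mul_one] at hx)
  · rintro ⟨φA, hA1, hA1', hA2⟩ ⟨φB, hB1, hB1', hB2⟩
    exact ⟨tensorPhi φA φB, tensorPhi_left φA φB hA1 hB1,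
      tensorPhi_right φA φB hA1' hB1',
      fun g x hx => tensorPhi_grading 𝒜 ℬ hsupp φA φB hA2 hB2 g x hx⟩
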